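/- For every integer n ≥ 1, the number of pointed André trees on n vertices equals the number of André trees on n+1 vertices: |𝒜*_n| = |𝒜_{n+1}|. -/

import Mathlib

open scoped Classical

noncomputable section

/-- An André tree on `n` vertices, encoded by its parent map `p` on `Fin n`
(vertex `i` stands for label `i+1`): every non-root vertex points to a strictly
larger parent, the root (label `n`) is a fixed point by convention, and each
vertex has at most two children. -/
def IsAndreTree (n : ℕ) (p : Fin n → Fin n) : Prop :=
  (∀ i : Fin n, (i : ℕ) + 1 < n → (i : ℕ) < (p i : ℕ)) ∧
  (∀ i : Fin n, ¬ (i : ℕ) + 1 < n → p i = i) ∧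
  ∀ j : Fin n, (Finset.univ.filter fun i : Fin n => (i : ℕ) + 1 < n ∧ p i = j).card ≤ 2

/-- The set of André trees on `n` vertices. -/
def andreTrees (n : ℕ) : Finset (Fin n → Fin n) :=
  Finset.univ.filter (IsAndreTree n)

/-- The hook length of the vertex `v`: the number of vertices in the subtree
rooted at `v`, i.e. the number of vertices `w` having `v` as an ancestor. -/
def hookA (n : ℕ) (p : Fin n → Fin n) (v : Fin n) : ℕ :=
  (Finset.univ.filter fun w : Fin n => ∃ k < n, p^[k] w = v).card

/-- The set of internal vertices, i.e. vertices with hook length `> 1`. -/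
def internalsA (n : ℕ) (p : Fin n → Fin n) : Finset (Fin n) :=
  Finset.univ.filter fun v => 1 < hookA n p v

/-- The number of children of the vertex `v`. -/
def childCount (n : ℕ) (p : Fin n → Fin n) (v : Fin n) : ℕ :=
  (Finset.univ.filter fun i : Fin n => (i : ℕ) + 1 < n ∧ p i = v).card

/-- The set of pointed André trees on `n` vertices: an André tree together with a
distinguished vertex having at most one child. -/
def pointedAndreTrees (n : ℕ) : Finset ((Fin n → Fin n) × Fin n) :=
  (andreTrees n ×ˢ Finset.univ).filter fun x => childCount n x.1 x.2 ≤ 1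

/-- `v` lies on the path from the root to the distinguished vertex `vstar`
(endpoints included), i.e. `v` is an ancestor of `vstar` (or `vstar` itself). -/
def OnPath (n : ℕ) (p : Fin n → Fin n) (vstar v : Fin n) : Prop :=
  ∃ k < n, p^[k] vstar = v

end

-- auxiliary

noncomputable section Aux

def Fwd (n : ℕ) (x : (Fin n → Fin n) × Fin n) : Fin (n + 1) → Fin (n + 1) :=
  fun i => Fin.cases x.2.succ (fun k => (x.1 k).succ) i

def Bwd (n : ℕ) (hn : 1 ≤ n) (q : Fin (n + 1) → Fin (n + 1)) :
    (Fin n → Fin n) × Fin n :=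
  (fun k => ⟨(q k.succ : ℕ) - 1, by have := (q k.succ).isLt; omega⟩,
   ⟨(q 0 : ℕ) - 1, by have := (q 0).isLt; omega⟩)

lemma count_split (n : ℕ) (q : Fin (n + 1) → Fin (n + 1)) (j : Fin (n + 1)) :
    childCount (n + 1) q j
      = (if (0 : ℕ) + 1 < n + 1 ∧ q 0 = j then 1 else 0)
        + (Finset.univ.filter fun k : Fin n => (k : ℕ) + 1 < n ∧ q k.succ = j).card := by
  rw [childCount, Finset.card_filter, Fin.sum_univ_succ, Finset.card_filter]
  congr 1
  apply Finset.sum_congr rfl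
  intro k _
  have : ((((k : Fin n).succ : Fin (n+1)) : ℕ) + 1 < n + 1 ∧ q k.succ = j)
      ↔ ((k : ℕ) + 1 < n ∧ q k.succ = j) := by
    simp [Fin.val_succ]
  simp only [this]

lemma mem_pointed {n : ℕ} {x : (Fin n → Fin n) × Fin n} :
    x ∈ pointedAndreTrees n ↔ IsAndreTree n x.1 ∧ childCount n x.1 x.2 ≤ 1 := by
  simp [pointedAndreTrees, andreTrees, Finset.mem_filter, Finset.mem_product]

lemma mem_andre {n : ℕ} {q : Fin n → Fin n} :
    q ∈ andreTrees n ↔ IsAndreTree n q := by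
  simp [andreTrees]

lemma Fwd_childCount (n : ℕ) (x : (Fin n → Fin n) × Fin n) (w : Fin n) :
    childCount (n + 1) (Fwd n x) w.succ
      = (if x.2 = w then 1 else 0) + childCount n x.1 w := by
  rw [count_split]
  congr 1
  · simp only [Fwd, Fin.cases_zero]
    by_cases h : x.2 = w
    · have hnn : ¬ n = 0 := fun h0 => (by omega : ¬ (w : ℕ) < 0) (h0 ▸ w.isLt)
      simp [h, hnn]
    · have : ¬ (x.2.succ = w.succ) := fun hs => h (Fin.succ_injective n hs)
      simp [h, this]
  · rw [childCount]
    apply Finset.card_bij (fun k _ => k) <;> simp only [Finset.mem_filter, Finset.mem_univ,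
      true_and]
    · intro k hk
      obtain ⟨h1, h2⟩ := hk
      exact ⟨h1, Fin.succ_injective n (by simpa [Fwd] using h2)⟩
    · intro a b _ _ h; exact h
    · intro k hk
      exact ⟨k, ⟨hk.1, by simp [Fwd, hk.2]⟩, rfl⟩

lemma Fwd_childCount_zero (n : ℕ) (x : (Fin n → Fin n) × Fin n) :
    childCount (n + 1) (Fwd n x) 0 = 0 := by
  rw [count_split]
  have h0 : ¬ (Fwd n x 0 = 0) := by simp [Fwd, Fin.succ_ne_zero]
  rw [if_neg (by tauto), Nat.zero_add]
  rw [Finset.card_eq_zero, Finset.filter_eq_empty_iff]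
  intro k _
  rintro ⟨-, h2⟩
  exact (Fin.succ_ne_zero (x.1 k)) (by simpa [Fwd] using h2)

lemma Fwd_mem (n : ℕ) (hn : 1 ≤ n) (x : (Fin n → Fin n) × Fin n)
    (hx : x ∈ pointedAndreTrees n) : Fwd n x ∈ andreTrees (n + 1) := by
  obtain ⟨⟨hA, hB, hC⟩, hpt⟩ := mem_pointed.mp hx
  rw [mem_andre]
  refine ⟨?_, ?_, ?_⟩
  · intro i hi
    induction i using Fin.cases with
    | zero => simp [Fwd]
    | succ k =>
      have hk : (k : ℕ) + 1 < n := by simpa [Fin.val_succ] using hi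
      have := hA k hk
      simp [Fwd, Fin.val_succ]
      omega
  · intro i hi
    induction i using Fin.cases with
    | zero => simp at hi; omega
    | succ k =>
      have hk : ¬ ((k : ℕ) + 1 < n) := by simp [Fin.val_succ] at hi; omega
      have := hB k hk
      simp [Fwd, this]
  · intro j
    induction j using Fin.cases with
    | zero =>
      have := Fwd_childCount_zero n x
      rw [childCount] at this
      omega
    | succ w =>
      have h := Fwd_childCount n x w
      rw [childCount] at h
      rw [show ((Finset.univ.filter fun i : Fin (n+1) => (i : ℕ) + 1 < n + 1 ∧ Fwd n x i = w.succ).card) = childCount (n+1) (Fwd n x) w.succ from rfl] at *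
      rw [Fwd_childCount]
      by_cases hw : x.2 = w
      · have := hpt
        rw [hw] at this
        simp [hw]; omega
      · have := hC w
        rw [childCount] at *
        simp [hw]; omega

lemma Bwd_val (n : ℕ) (hn : 1 ≤ n) (q : Fin (n + 1) → Fin (n + 1)) (k : Fin n) :
    ((Bwd n hn q).1 k : ℕ) = (q k.succ : ℕ) - 1 := rfl

lemma Bwd_nonzero (n : ℕ) (hn : 1 ≤ n) {q : Fin (n + 1) → Fin (n + 1)}
    (hq : IsAndreTree (n + 1) q) : ∀ i : Fin (n + 1), 1 ≤ (q i : ℕ) := by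
  obtain ⟨hA, hB, hC⟩ := hq
  intro i
  by_cases h : (i : ℕ) + 1 < n + 1
  · have := hA i h; omega
  · have := hB i h
    have hi : (i : ℕ) = n := by have := i.isLt; omega
    rw [this]; omega

lemma Bwd_mem (n : ℕ) (hn : 1 ≤ n) (q : Fin (n + 1) → Fin (n + 1))
    (hq : q ∈ andreTrees (n + 1)) : Bwd n hn q ∈ pointedAndreTrees n := by
  rw [mem_andre] at hq
  have hnz := Bwd_nonzero n hn hq
  obtain ⟨hA, hB, hC⟩ := hq
  -- key: filter sets correspond
  have hfilt : ∀ w : Fin n,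
      (Finset.univ.filter fun k : Fin n => (k : ℕ) + 1 < n ∧ (Bwd n hn q).1 k = w)
      = (Finset.univ.filter fun k : Fin n => (k : ℕ) + 1 < n ∧ q k.succ = w.succ) := by
    intro w
    apply Finset.filter_congr
    intro k _
    constructor
    · rintro ⟨h1, h2⟩
      refine ⟨h1, ?_⟩
      have hv : ((Bwd n hn q).1 k : ℕ) = w := by rw [h2]
      rw [Bwd_val] at hv
      have := hnz k.succ
      apply Fin.ext
      simp [Fin.val_succ]
      omega
    · rintro ⟨h1, h2⟩
      refine ⟨h1, ?_⟩
      apply Fin.ext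
      rw [Bwd_val, h2]
      simp [Fin.val_succ]
  have hcc : ∀ w : Fin n,
      (if (0:ℕ) + 1 < n + 1 ∧ q 0 = w.succ then 1 else 0)
        + childCount n (Bwd n hn q).1 w = childCount (n + 1) q w.succ := by
    intro w
    rw [count_split, childCount, hfilt]
  rw [mem_pointed]
  refine ⟨⟨?_, ?_, ?_⟩, ?_⟩
  · intro k hk
    have hks : ((k.succ : Fin (n+1)) : ℕ) + 1 < n + 1 := by simp [Fin.val_succ]; omega
    have := hA k.succ hks
    rw [Bwd_val]
    simp [Fin.val_succ] at this
    omega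
  · intro k hk
    have hks : ¬ (((k.succ : Fin (n+1)) : ℕ) + 1 < n + 1) := by
      simp [Fin.val_succ]; omega
    have := hB k.succ hks
    apply Fin.ext
    rw [Bwd_val, this]
    simp [Fin.val_succ]
  · intro w
    have h2 : childCount (n + 1) q w.succ ≤ 2 := hC w.succ
    have hle : childCount n (Bwd n hn q).1 w ≤ childCount (n + 1) q w.succ := by
      rw [← hcc w]; split <;> omega
    show childCount n (Bwd n hn q).1 w ≤ 2
    omega
  · -- the distinguished vertex has at most one child
    set v := (Bwd n hn q).2 with hv
    have hq0 : q 0 = v.succ := by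
      apply Fin.ext
      have := hnz 0
      simp [hv, Bwd, Fin.val_succ]
      omega
    have hthis := hcc v
    have h2 : childCount (n + 1) q v.succ ≤ 2 := hC v.succ
    rw [if_pos ⟨by omega, hq0⟩] at hthis
    show childCount n (Bwd n hn q).1 v ≤ 1
    omega

lemma left_inv (n : ℕ) (hn : 1 ≤ n) (x : (Fin n → Fin n) × Fin n) :
    Bwd n hn (Fwd n x) = x := by
  ext1
  · funext k
    apply Fin.ext
    rw [Bwd_val]
    simp [Fwd, Fin.val_succ]
  · apply Fin.ext
    show ((Fwd n x 0 : ℕ) - 1) = (x.2 : ℕ)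
    simp [Fwd, Fin.val_succ]

lemma right_inv (n : ℕ) (hn : 1 ≤ n) (q : Fin (n + 1) → Fin (n + 1))
    (hq : q ∈ andreTrees (n + 1)) : Fwd n (Bwd n hn q) = q := by
  have hnz := Bwd_nonzero n hn (mem_andre.mp hq)
  funext i
  induction i using Fin.cases with
  | zero =>
    apply Fin.ext
    have := hnz 0
    simp [Fwd, Bwd, Fin.val_succ]
    omega
  | succ k =>
    apply Fin.ext
    have := hnz k.succ
    simp [Fwd, Fin.val_succ, Bwd_val]
    omega

end Aux


/-- The number of pointed André trees on `n` vertices equals the number of André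
trees on `n + 1` vertices. -/
theorem stmt12 (n : ℕ) (hn : 1 ≤ n) :
    (pointedAndreTrees n).card = (andreTrees (n + 1)).card := by
  apply Finset.card_bij' (fun x _ => Fwd n x) (fun q _ => Bwd n hn q)
  · intro x hx; exact Fwd_mem n hn x hx
  · intro q hq; exact Bwd_mem n hn q hq
  · intro x hx; exact left_inv n hn x
  · intro q hq; exact right_inv n hn q hq
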